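/- arXiv:1811.09695 — 3 statements merged into one kernel-verified Lean document; each statement's English description precedes it below -/
import Mathlib

section
/- Let X_1,…,X_q be mutually independent finitely-valued random variables and let Z̃ be any finitely-valued random variable on the same finite probability space. Then for every S ⊆ {1,…,q}: Σ_{i∈S} I(X_i; Z̃ | X_{i+1:q}) ≥ I(X_S; Z̃), where X_{i+1:q} = (X_{i+1},…,X_q) and X_S = (X_i)_{i∈S}. -/
open Finset

/-- Pmf of the random variable `T` under the pmf `p` on a finite space. -/
noncomputable def pmOf {Ω D : Type} [Fintype Ω] [DecidableEq D]
    (p : Ω → ℝ) (T : Ω → D) (d : D) : ℝ :=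
  ∑ ω, if T ω = d then p ω else 0

/-- Shannon entropy of the random variable `T` under `p`. -/
noncomputable def ent {Ω D : Type} [Fintype Ω] [Fintype D] [DecidableEq D]
    (p : Ω → ℝ) (T : Ω → D) : ℝ :=
  ∑ d, Real.negMulLog (pmOf p T d)

/-- Mutual information `I(U;V) = H(U)+H(V)−H(U,V)`. -/
noncomputable def MI {Ω A B : Type} [Fintype Ω] [Fintype A] [Fintype B]
    [DecidableEq A] [DecidableEq B] (p : Ω → ℝ) (U : Ω → A) (V : Ω → B) : ℝ :=
  ent p U + ent p V - ent p (fun ω => (U ω, V ω))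

/-- Conditional mutual information `I(U;V|Wc) = H(U,Wc)+H(V,Wc)−H(U,V,Wc)−H(Wc)`. -/
noncomputable def condMI {Ω A B C : Type} [Fintype Ω] [Fintype A] [Fintype B] [Fintype C]
    [DecidableEq A] [DecidableEq B] [DecidableEq C]
    (p : Ω → ℝ) (U : Ω → A) (V : Ω → B) (Wc : Ω → C) : ℝ :=
  ent p (fun ω => (U ω, Wc ω)) + ent p (fun ω => (V ω, Wc ω))
    - ent p (fun ω => (U ω, V ω, Wc ω)) - ent p Wc

set_option linter.unusedSectionVars false

section Basics
variable {Ω : Type} [Fintype Ω] {p : Ω → ℝ}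

lemma pmOf_nonneg {D : Type} [DecidableEq D] (hp : ∀ ω, 0 ≤ p ω) (T : Ω → D) (d : D) :
    0 ≤ pmOf p T d := by
  apply Finset.sum_nonneg; intro ω _; split <;> simp [hp ω]

lemma sum_pmOf {D : Type} [Fintype D] [DecidableEq D] (hp1 : ∑ ω, p ω = 1) (T : Ω → D) :
    ∑ d, pmOf p T d = 1 := by
  unfold pmOf
  rw [Finset.sum_comm]
  rw [← hp1]
  apply Finset.sum_congr rfl
  intro ω _
  simp

lemma pmOf_comp {D E : Type} [DecidableEq D] [Fintype D] [DecidableEq E]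
    (T : Ω → D) (f : D → E) (e : E) :
    pmOf p (fun ω => f (T ω)) e = ∑ d, if f d = e then pmOf p T d else 0 := by
  unfold pmOf
  have h : ∀ d, (if f d = e then ∑ ω, if T ω = d then p ω else 0 else 0)
      = ∑ ω, if T ω = d then (if f (T ω) = e then p ω else 0) else 0 := by
    intro d; split
    · apply Finset.sum_congr rfl; intro ω _; split <;> simp_all
    · symm; apply Finset.sum_eq_zero; intro ω _; split <;> simp_all
  simp only [h]
  rw [Finset.sum_comm]
  apply Finset.sum_congr rfl
  intro ω _
  rw [Finset.sum_ite_eq Finset.univ (T ω)]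
  simp

lemma ent_inj {D E : Type} [Fintype D] [DecidableEq D] [Fintype E] [DecidableEq E]
    (T : Ω → D) (T' : Ω → E) (f : D → E) (hf : Function.Injective f)
    (h : ∀ ω, T' ω = f (T ω)) : ent p T' = ent p T := by
  have key : ∀ d, pmOf p T' (f d) = pmOf p T d := by
    intro d
    unfold pmOf
    apply Finset.sum_congr rfl
    intro ω _
    simp [h ω, hf.eq_iff]
  have key0 : ∀ e, e ∉ Finset.univ.image f → pmOf p T' e = 0 := by
    intro e he
    unfold pmOf
    apply Finset.sum_eq_zero
    intro ω _
    simp only [h ω]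
    rw [if_neg]
    intro hc
    exact he (Finset.mem_image.2 ⟨T ω, Finset.mem_univ _, hc⟩)
  unfold ent
  rw [← Finset.sum_subset (Finset.subset_univ (Finset.univ.image f))]
  · rw [Finset.sum_image (fun a _ b _ hab => hf hab)]
    apply Finset.sum_congr rfl
    intro d _
    rw [key]
  · intro e _ he
    rw [key0 e he, Real.negMulLog_zero]

end Basics

section Nonneg
variable {Ω : Type} [Fintype Ω] {p : Ω → ℝ}
variable {A B C : Type} [Fintype A] [Fintype B] [Fintype C]
  [DecidableEq A] [DecidableEq B] [DecidableEq C]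

lemma negMulLog_sum_eq {ι : Type} [Fintype ι] (f : ι → ℝ) (x : ℝ) (h : x = ∑ i, f i) :
    Real.negMulLog x = ∑ i, -(f i * Real.log x) := by
  subst h
  rw [Real.negMulLog, neg_mul, Finset.sum_mul, ← Finset.sum_neg_distrib]

lemma sum3_comm (F : A → B → C → ℝ) :
    ∑ b, ∑ c, ∑ a, F a b c = ∑ a, ∑ b, ∑ c, F a b c := by
  have h1 : ∀ b, (∑ c, ∑ a, F a b c) = ∑ a, ∑ c, F a b c := fun b => Finset.sum_comm
  simp only [h1]
  exact Finset.sum_comm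

lemma sum3_comm' (F : A → B → C → ℝ) :
    ∑ c, ∑ a, ∑ b, F a b c = ∑ a, ∑ b, ∑ c, F a b c := by
  rw [Finset.sum_comm]
  exact Finset.sum_congr rfl fun a _ => Finset.sum_comm

lemma condMI_nonneg (hp : ∀ ω, 0 ≤ p ω) (hp1 : ∑ ω, p ω = 1)
    (U : Ω → A) (V : Ω → B) (W : Ω → C) : 0 ≤ condMI p U V W := by
  classical
  let P : A → B → C → ℝ := fun a b c => pmOf p (fun ω => (U ω, V ω, W ω)) (a, b, c)
  let pUW : A → C → ℝ := fun a c => pmOf p (fun ω => (U ω, W ω)) (a, c)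
  let pVW : B → C → ℝ := fun b c => pmOf p (fun ω => (V ω, W ω)) (b, c)
  let pW : C → ℝ := fun c => pmOf p W c
  have hPn : ∀ a b c, 0 ≤ P a b c := fun a b c => pmOf_nonneg hp _ _
  have hUWn : ∀ a c, 0 ≤ pUW a c := fun a c => pmOf_nonneg hp _ _
  have hVWn : ∀ b c, 0 ≤ pVW b c := fun b c => pmOf_nonneg hp _ _
  have hWn : ∀ c, 0 ≤ pW c := fun c => pmOf_nonneg hp _ _
  -- marginals
  have mUW : ∀ a c, pUW a c = ∑ b, P a b c := by
    intro a c
    show (∑ ω, if (U ω, W ω) = (a, c) then p ω else 0)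
        = ∑ b, ∑ ω, if (U ω, V ω, W ω) = (a, b, c) then p ω else 0
    rw [Finset.sum_comm]
    exact Finset.sum_congr rfl fun ω _ => by
      simp [Prod.ext_iff, ite_and, Finset.sum_ite_eq]
  have mVW : ∀ b c, pVW b c = ∑ a, P a b c := by
    intro b c
    show (∑ ω, if (V ω, W ω) = (b, c) then p ω else 0)
        = ∑ a, ∑ ω, if (U ω, V ω, W ω) = (a, b, c) then p ω else 0
    rw [Finset.sum_comm]
    exact Finset.sum_congr rfl fun ω _ => by
      simp [Prod.ext_iff, ite_and, Finset.sum_ite_eq]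
  have mW : ∀ c, pW c = ∑ a, ∑ b, P a b c := by
    intro c
    show (∑ ω, if W ω = c then p ω else 0)
        = ∑ a, ∑ b, ∑ ω, if (U ω, V ω, W ω) = (a, b, c) then p ω else 0
    conv_rhs => enter [2, a]; rw [Finset.sum_comm]
    rw [Finset.sum_comm]
    exact Finset.sum_congr rfl fun ω _ => by
      simp [Prod.ext_iff, ite_and, Finset.sum_ite_eq]
  -- domination
  have dUW : ∀ a b c, P a b c ≤ pUW a c := by
    intro a b c
    rw [mUW a c]
    exact Finset.single_le_sum (fun b _ => hPn a b c) (Finset.mem_univ b)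
  have dVW : ∀ a b c, P a b c ≤ pVW b c := by
    intro a b c
    rw [mVW b c]
    exact Finset.single_le_sum (fun a _ => hPn a b c) (Finset.mem_univ a)
  have dWa : ∀ a c, pUW a c ≤ pW c := by
    intro a c
    rw [mW c]
    calc pUW a c = ∑ b, P a b c := mUW a c
    _ ≤ ∑ a, ∑ b, P a b c :=
      Finset.single_le_sum (f := fun a => ∑ b, P a b c)
        (fun a _ => Finset.sum_nonneg fun b _ => hPn a b c) (Finset.mem_univ a)
  have dW : ∀ a b c, P a b c ≤ pW c := fun a b c => le_trans (dUW a b c) (dWa a c)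
  -- column sums of marginals
  have sUW : ∀ c, ∑ a, pUW a c = pW c := by
    intro c; rw [mW c]; exact Finset.sum_congr rfl fun a _ => mUW a c
  have sVW : ∀ c, ∑ b, pVW b c = pW c := by
    intro c
    rw [mW c, Finset.sum_comm]
    exact Finset.sum_congr rfl fun b _ => mVW b c
  -- entropies as triple sums
  have e1 : ent p (fun ω => (U ω, W ω)) = ∑ a, ∑ b, ∑ c, -(P a b c * Real.log (pUW a c)) := by
    unfold ent
    rw [Fintype.sum_prod_type]
    refine Finset.sum_congr rfl fun a _ => ?_
    rw [Finset.sum_comm]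
    refine Finset.sum_congr rfl fun c _ => ?_
    exact negMulLog_sum_eq (fun b => P a b c) _ (mUW a c)
  have e2 : ent p (fun ω => (V ω, W ω)) = ∑ a, ∑ b, ∑ c, -(P a b c * Real.log (pVW b c)) := by
    rw [← sum3_comm (fun a b c => -(P a b c * Real.log (pVW b c)))]
    unfold ent
    rw [Fintype.sum_prod_type]
    refine Finset.sum_congr rfl fun b _ => ?_
    refine Finset.sum_congr rfl fun c _ => ?_
    exact negMulLog_sum_eq (fun a => P a b c) _ (mVW b c)
  have e3 : ent p W = ∑ a, ∑ b, ∑ c, -(P a b c * Real.log (pW c)) := by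
    rw [← sum3_comm' (fun a b c => -(P a b c * Real.log (pW c)))]
    unfold ent
    refine Finset.sum_congr rfl fun c _ => ?_
    rw [negMulLog_sum_eq (fun x : A × B => P x.1 x.2 c) _ (by rw [Fintype.sum_prod_type]; exact mW c),
      Fintype.sum_prod_type]
  have e4 : ent p (fun ω => (U ω, V ω, W ω)) = ∑ a, ∑ b, ∑ c, Real.negMulLog (P a b c) := by
    unfold ent
    rw [Fintype.sum_prod_type]
    refine Finset.sum_congr rfl fun a _ => ?_
    rw [Fintype.sum_prod_type]
  have key : condMI p U V W = ∑ a, ∑ b, ∑ c,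
      (-(P a b c * Real.log (pUW a c)) + -(P a b c * Real.log (pVW b c))
        - Real.negMulLog (P a b c) - -(P a b c * Real.log (pW c))) := by
    unfold condMI
    rw [e1, e2, e3, e4]
    simp only [← Finset.sum_sub_distrib, ← Finset.sum_add_distrib]
  -- per-term lower bound
  have term : ∀ a b c,
      -(P a b c * Real.log (pUW a c)) + -(P a b c * Real.log (pVW b c))
        - Real.negMulLog (P a b c) - -(P a b c * Real.log (pW c))
      ≥ P a b c - pUW a c * pVW b c / pW c := by
    intro a b c
    rcases eq_or_lt_of_le (hPn a b c) with h0 | h0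
    · rw [← h0]
      simp only [Real.negMulLog_zero, zero_mul, neg_zero, add_zero, sub_zero, zero_sub]
      have : 0 ≤ pUW a c * pVW b c / pW c :=
        div_nonneg (mul_nonneg (hUWn a c) (hVWn b c)) (hWn c)
      simp [Real.negMulLog]
      linarith
    · have hUW0 : 0 < pUW a c := lt_of_lt_of_le h0 (dUW a b c)
      have hVW0 : 0 < pVW b c := lt_of_lt_of_le h0 (dVW a b c)
      have hW0 : 0 < pW c := lt_of_lt_of_le h0 (dW a b c)
      have hx : 0 < pUW a c * pVW b c / (P a b c * pW c) := by positivity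
      have hlog := Real.log_le_sub_one_of_pos hx
      rw [Real.log_div (by positivity) (by positivity), Real.log_mul (ne_of_gt hUW0)
        (ne_of_gt hVW0), Real.log_mul (ne_of_gt h0) (ne_of_gt hW0)] at hlog
      have hmul := mul_le_mul_of_nonneg_left hlog (le_of_lt h0)
      have hrw : P a b c * (pUW a c * pVW b c / (P a b c * pW c) - 1)
          = pUW a c * pVW b c / pW c - P a b c := by
        field_simp
      rw [hrw] at hmul
      rw [Real.negMulLog]
      nlinarith [hmul]
  -- sum of the RHS equals 1 - something ≤ 1
  have total : (∑ a, ∑ b, ∑ c, P a b c) = 1 := by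
    have := sum_pmOf hp1 (fun ω => (U ω, V ω, W ω))
    rw [Fintype.sum_prod_type] at this
    rw [← this]
    refine Finset.sum_congr rfl fun a _ => ?_
    rw [Fintype.sum_prod_type]
  have ratio : (∑ a, ∑ b, ∑ c, pUW a c * pVW b c / pW c) ≤ 1 := by
    have h1 : (∑ a, ∑ b, ∑ c, pUW a c * pVW b c / pW c)
        = ∑ c, (∑ a, pUW a c) * (∑ b, pVW b c) / pW c := by
      rw [← sum3_comm' (fun a b c => pUW a c * pVW b c / pW c)]
      refine Finset.sum_congr rfl fun c _ => ?_
      rw [Finset.sum_mul_sum, Finset.sum_div]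
      refine Finset.sum_congr rfl fun a _ => ?_
      rw [Finset.sum_div]
    rw [h1]
    have h2 : ∀ c, (∑ a, pUW a c) * (∑ b, pVW b c) / pW c ≤ pW c := by
      intro c
      rw [sUW c, sVW c]
      rcases eq_or_lt_of_le (hWn c) with h0 | h0
      · rw [← h0]; simp
      · rw [mul_div_assoc, div_self (ne_of_gt h0), mul_one]
    calc ∑ c, (∑ a, pUW a c) * (∑ b, pVW b c) / pW c ≤ ∑ c, pW c :=
          Finset.sum_le_sum fun c _ => h2 c
    _ = 1 := sum_pmOf hp1 W
  have main : condMI p U V W ≥ (∑ a, ∑ b, ∑ c, P a b c)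
      - ∑ a, ∑ b, ∑ c, pUW a c * pVW b c / pW c := by
    rw [key, ← Finset.sum_sub_distrib]
    refine Finset.sum_le_sum fun a _ => ?_
    rw [← Finset.sum_sub_distrib]
    refine Finset.sum_le_sum fun b _ => ?_
    rw [← Finset.sum_sub_distrib]
    exact Finset.sum_le_sum fun c _ => term a b c
  rw [total] at main
  linarith
end Nonneg

section Indep
variable {Ω : Type} [Fintype Ω] {p : Ω → ℝ}
variable {A B C E : Type} [Fintype A] [Fintype B] [Fintype C] [Fintype E]
  [DecidableEq A] [DecidableEq B] [DecidableEq C] [DecidableEq E]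

lemma ent_pair_indep (hp1 : ∑ ω, p ω = 1) (U : Ω → A) (V : Ω → B)
    (h : ∀ a b, pmOf p (fun ω => (U ω, V ω)) (a, b) = pmOf p U a * pmOf p V b) :
    ent p (fun ω => (U ω, V ω)) = ent p U + ent p V := by
  have expand : ent p (fun ω => (U ω, V ω))
      = ∑ a, ∑ b, Real.negMulLog (pmOf p (fun ω => (U ω, V ω)) (a, b)) := by
    unfold ent; rw [Fintype.sum_prod_type]
  rw [expand]
  have step : ∀ a, (∑ b, Real.negMulLog (pmOf p (fun ω => (U ω, V ω)) (a, b)))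
      = Real.negMulLog (pmOf p U a) + pmOf p U a * ent p V := by
    intro a
    have h2 : ∀ b, Real.negMulLog (pmOf p (fun ω => (U ω, V ω)) (a, b))
        = pmOf p V b * Real.negMulLog (pmOf p U a)
          + pmOf p U a * Real.negMulLog (pmOf p V b) := by
      intro b; rw [h a b, Real.negMulLog_mul]
    simp only [h2]
    rw [Finset.sum_add_distrib, ← Finset.sum_mul, sum_pmOf hp1, one_mul, ← Finset.mul_sum]
    rfl
  simp only [step]
  rw [Finset.sum_add_distrib, ← Finset.sum_mul, sum_pmOf hp1, one_mul]
  rfl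

lemma pmOf_pair_comp (U : Ω → A) (V : Ω → B) (g : B → E)
    (h : ∀ a b, pmOf p (fun ω => (U ω, V ω)) (a, b) = pmOf p U a * pmOf p V b)
    (a : A) (e : E) :
    pmOf p (fun ω => (U ω, g (V ω))) (a, e)
      = pmOf p U a * pmOf p (fun ω => g (V ω)) e := by
  have key : pmOf p (fun ω => (U ω, g (V ω))) (a, e)
      = ∑ b, if g b = e then pmOf p (fun ω => (U ω, V ω)) (a, b) else 0 := by
    simp only [pmOf]
    have hb : ∀ b, (if g b = e then ∑ ω, if (U ω, V ω) = (a, b) then p ω else 0 else 0)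
        = ∑ ω, if (U ω, V ω) = (a, b) ∧ g b = e then p ω else 0 := by
      intro b
      split
      · refine Finset.sum_congr rfl fun ω _ => by simp_all
      · symm; refine Finset.sum_eq_zero fun ω _ => by simp_all
    simp only [hb]
    rw [Finset.sum_comm]
    refine Finset.sum_congr rfl fun ω _ => ?_
    simp [Prod.ext_iff, ite_and, Finset.sum_ite_eq]
  rw [key]
  have h2 : ∀ b, (if g b = e then pmOf p (fun ω => (U ω, V ω)) (a, b) else 0)
      = pmOf p U a * (if g b = e then pmOf p V b else 0) := by
    intro b; split
    · rw [h a b]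
    · rw [mul_zero]
  simp only [h2]
  rw [← Finset.mul_sum, ← pmOf_comp V g e]
end Indep

section Step
variable {Ω : Type} [Fintype Ω] {p : Ω → ℝ}
variable {A B C E : Type} [Fintype A] [Fintype B] [Fintype C] [Fintype E]
  [DecidableEq A] [DecidableEq B] [DecidableEq C] [DecidableEq E]

lemma condMI_mono (hp : ∀ ω, 0 ≤ p ω) (hp1 : ∑ ω, p ω = 1)
    (U : Ω → A) (Z : Ω → B) (W' : Ω → C) (g : C → E)
    (h : ∀ a c, pmOf p (fun ω => (U ω, W' ω)) (a, c) = pmOf p U a * pmOf p W' c) :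
    condMI p U Z (fun ω => g (W' ω)) ≤ condMI p U Z W' := by
  have hUW' := ent_pair_indep hp1 U W' h
  have hUw := ent_pair_indep hp1 U (fun ω => g (W' ω)) (pmOf_pair_comp U W' g h)
  have r3 : ent p (fun ω => ((Z ω, W' ω), g (W' ω))) = ent p (fun ω => (Z ω, W' ω)) :=
    ent_inj (fun ω => (Z ω, W' ω)) _ (fun x => ((x.1, x.2), g x.2))
      (fun x y hxy => by
        simp only [Prod.mk.injEq] at hxy; exact Prod.ext hxy.1.1 hxy.1.2)
      (fun ω => rfl)
  have r4 : ent p (fun ω => (U ω, (Z ω, W' ω), g (W' ω)))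
      = ent p (fun ω => (U ω, Z ω, W' ω)) :=
    ent_inj (fun ω => (U ω, Z ω, W' ω)) _ (fun x => (x.1, (x.2.1, x.2.2), g x.2.2))
      (fun x y hxy => by
        simp only [Prod.mk.injEq] at hxy
        exact Prod.ext hxy.1 (Prod.ext hxy.2.1.1 hxy.2.1.2))
      (fun ω => rfl)
  have r5 : ent p (fun ω => (W' ω, Z ω, g (W' ω))) = ent p (fun ω => (Z ω, W' ω)) :=
    ent_inj (fun ω => (Z ω, W' ω)) _ (fun x => (x.2, x.1, g x.2))
      (fun x y hxy => by
        simp only [Prod.mk.injEq] at hxy; exact Prod.ext hxy.2.1 hxy.1)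
      (fun ω => rfl)
  have r6 : ent p (fun ω => (U ω, W' ω, Z ω, g (W' ω)))
      = ent p (fun ω => (U ω, Z ω, W' ω)) :=
    ent_inj (fun ω => (U ω, Z ω, W' ω)) _ (fun x => (x.1, x.2.2, x.2.1, g x.2.2))
      (fun x y hxy => by
        simp only [Prod.mk.injEq] at hxy
        exact Prod.ext hxy.1 (Prod.ext hxy.2.2.1 hxy.2.1))
      (fun ω => rfl)
  have n1 := condMI_nonneg hp hp1 U (fun ω => (Z ω, W' ω)) (fun ω => g (W' ω))
  have n2 := condMI_nonneg hp hp1 U W' (fun ω => (Z ω, g (W' ω)))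
  simp only [condMI] at n1 n2 ⊢
  rw [r3, r4] at n1
  rw [r5, r6] at n2
  linarith [hUW', hUw, n1, n2]

lemma MI_chain (U : Ω → A) (V : Ω → B) (Z : Ω → C) :
    MI p (fun ω => (U ω, V ω)) Z = MI p V Z + condMI p U Z V := by
  have r1 : ent p (fun ω => ((U ω, V ω), Z ω)) = ent p (fun ω => (U ω, Z ω, V ω)) :=
    ent_inj (fun ω => (U ω, Z ω, V ω)) _ (fun x => ((x.1, x.2.2), x.2.1))
      (fun x y hxy => by
        simp only [Prod.mk.injEq] at hxy
        exact Prod.ext hxy.1.1 (Prod.ext hxy.2 hxy.1.2))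
      (fun ω => rfl)
  have r2 : ent p (fun ω => (V ω, Z ω)) = ent p (fun ω => (Z ω, V ω)) :=
    ent_inj (fun ω => (Z ω, V ω)) _ (fun x => (x.2, x.1))
      (fun x y hxy => by
        simp only [Prod.mk.injEq] at hxy; exact Prod.ext hxy.2 hxy.1)
      (fun ω => rfl)
  simp only [MI, condMI]
  rw [r1, r2]
  ring
end Step

section Product
variable {Ω : Type} [Fintype Ω] {p : Ω → ℝ}
variable {q : ℕ} {𝒳 : Fin q → Type} [∀ i, Fintype (𝒳 i)] [∀ i, DecidableEq (𝒳 i)]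

lemma sel (hp1 : ∑ ω, p ω = 1) (X : ∀ i, Ω → 𝒳 i) (u : ∀ j, Option (𝒳 j)) :
    (∑ x : ∀ j, 𝒳 j, if (∀ j c, u j = some c → x j = c)
        then ∏ j, pmOf p (X j) (x j) else 0)
      = ∏ j, (u j).elim 1 (pmOf p (X j)) := by
  classical
  have h1 : ∀ x : ∀ j, 𝒳 j, (if (∀ j c, u j = some c → x j = c)
        then ∏ j, pmOf p (X j) (x j) else 0)
      = ∏ j, (if (∀ c, u j = some c → x j = c) then pmOf p (X j) (x j) else 0) := by
    intro x
    split
    · rename_i hx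
      exact (Finset.prod_congr rfl fun j _ => by rw [if_pos (fun c hc => hx j c hc)]).symm
    · rename_i hx
      push_neg at hx
      obtain ⟨j, c, hc, hne⟩ := hx
      symm
      apply Finset.prod_eq_zero (Finset.mem_univ j)
      rw [if_neg]
      push_neg
      exact ⟨c, hc, hne⟩
  simp only [h1]
  have h2 := Finset.prod_univ_sum (fun j : Fin q => (Finset.univ : Finset (𝒳 j)))
    (fun j y => if (∀ c, u j = some c → y = c) then pmOf p (X j) y else 0)
  rw [Fintype.piFinset_univ] at h2
  rw [← h2]
  refine Finset.prod_congr rfl fun j _ => ?_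
  rcases hu : u j with _ | c
  · simp [hu, sum_pmOf hp1 (X j)]
  · simp [hu, Finset.sum_ite_eq' Finset.univ c (pmOf p (X j))]

lemma indep_tail (hp1 : ∑ ω, p ω = 1) (X : ∀ i, Ω → 𝒳 i)
    (hind : ∀ x : ∀ i, 𝒳 i,
      pmOf p (fun ω => fun i => X i ω) x = ∏ i, pmOf p (X i) (x i))
    (i : Fin q) (a : 𝒳 i) (v : ∀ t : {t : Fin q // i < t}, 𝒳 t) :
    pmOf p (fun ω => (X i ω, fun t : {t : Fin q // i < t} => X t.1 ω)) (a, v)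
      = pmOf p (X i) a * pmOf p (fun ω => fun t : {t : Fin q // i < t} => X t.1 ω) v := by
  classical
  set u0 : ∀ j, Option (𝒳 j) := fun j => if H : i < j then some (v ⟨j, H⟩) else none with hu0
  set u2 : ∀ j, Option (𝒳 j) :=
    fun j => if H : j = i then some (cast (congrArg 𝒳 H.symm) a) else none with hu2
  set u1 : ∀ j, Option (𝒳 j) := fun j => if H : i < j then some (v ⟨j, H⟩)
    else if H : j = i then some (cast (congrArg 𝒳 H.symm) a) else none with hu1
  -- three pmOf computations
  have c0 : pmOf p (fun ω => fun t : {t : Fin q // i < t} => X t.1 ω) v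
      = ∏ j, (u0 j).elim 1 (pmOf p (X j)) := by
    have e := pmOf_comp (p := p) (fun ω => fun j => X j ω)
      (fun x => fun t : {t : Fin q // i < t} => x t.1) v
    rw [show pmOf p (fun ω => fun t : {t : Fin q // i < t} => X t.1 ω) v
      = pmOf p (fun ω => (fun x => fun t : {t : Fin q // i < t} => x t.1)
          ((fun ω => fun j => X j ω) ω)) v from rfl, e]
    simp only [hind]
    rw [← sel hp1 X u0]
    refine Finset.sum_congr rfl fun x _ => ?_
    congr 1
    apply propext
    constructor
    · intro hx j c hc
      simp only [hu0] at hc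
      by_cases H : i < j
      · rw [dif_pos H] at hc
        obtain rfl : c = v ⟨j, H⟩ := by injection hc.symm
        exact congrFun hx ⟨j, H⟩
      · rw [dif_neg H] at hc; exact absurd hc (by simp)
    · intro hx
      funext t
      exact hx t.1 (v ⟨t.1, t.2⟩) (by simp only [hu0]; rw [dif_pos t.2])
  have c2 : pmOf p (X i) a = ∏ j, (u2 j).elim 1 (pmOf p (X j)) := by
    have e := pmOf_comp (p := p) (fun ω => fun j => X j ω) (fun x => x i) a
    rw [show pmOf p (X i) a
      = pmOf p (fun ω => (fun x => x i) ((fun ω => fun j => X j ω) ω)) a from rfl, e]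
    simp only [hind]
    rw [← sel hp1 X u2]
    refine Finset.sum_congr rfl fun x _ => ?_
    congr 1
    apply propext
    constructor
    · intro hx j c hc
      simp only [hu2] at hc
      by_cases H : j = i
      · subst H
        rw [dif_pos rfl] at hc
        obtain rfl : c = a := by injection hc.symm
        exact hx
      · rw [dif_neg H] at hc; exact absurd hc (by simp)
    · intro hx
      exact hx i a (by simp [hu2])
  have c1 : pmOf p (fun ω => (X i ω, fun t : {t : Fin q // i < t} => X t.1 ω)) (a, v)
      = ∏ j, (u1 j).elim 1 (pmOf p (X j)) := by
    have e := pmOf_comp (p := p) (fun ω => fun j => X j ω)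
      (fun x => (x i, fun t : {t : Fin q // i < t} => x t.1)) (a, v)
    rw [show pmOf p (fun ω => (X i ω, fun t : {t : Fin q // i < t} => X t.1 ω)) (a, v)
      = pmOf p (fun ω => (fun x => (x i, fun t : {t : Fin q // i < t} => x t.1))
          ((fun ω => fun j => X j ω) ω)) (a, v) from rfl, e]
    simp only [hind]
    rw [← sel hp1 X u1]
    refine Finset.sum_congr rfl fun x _ => ?_
    congr 1
    apply propext
    constructor
    · intro hx j c hc
      rw [Prod.ext_iff] at hx
      obtain ⟨hx1, hx2⟩ := hx
      simp only [hu1] at hc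
      by_cases H : i < j
      · rw [dif_pos H] at hc
        obtain rfl : c = v ⟨j, H⟩ := by injection hc.symm
        exact congrFun hx2 ⟨j, H⟩
      · rw [dif_neg H] at hc
        by_cases H2 : j = i
        · subst H2
          rw [dif_pos rfl] at hc
          obtain rfl : c = a := by injection hc.symm
          exact hx1
        · rw [dif_neg H2] at hc; exact absurd hc (by simp)
    · intro hx
      refine Prod.ext ?_ ?_
      · exact hx i a (by simp [hu1])
      · funext t
        exact hx t.1 (v ⟨t.1, t.2⟩) (by simp only [hu1]; rw [dif_pos t.2])
  rw [c0, c1, c2, ← Finset.prod_mul_distrib]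
  refine Finset.prod_congr rfl fun j _ => ?_
  simp only [hu0, hu1, hu2]
  by_cases H : i < j
  · have hji : ¬ j = i := fun h => absurd H (by rw [h]; exact lt_irrefl i)
    simp only [dif_pos H, dif_neg hji]
    simp
  · simp only [dif_neg H]
    by_cases H2 : j = i
    · simp only [dif_pos H2]
      simp
    · simp only [dif_neg H2]
      simp
end Product

section Chain
variable {Ω : Type} [Fintype Ω] {p : Ω → ℝ}
variable {A B C E : Type} [Fintype A] [Fintype B] [Fintype C] [Fintype E]
  [DecidableEq A] [DecidableEq B] [DecidableEq C] [DecidableEq E]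

lemma condMI_congr₃ (U : Ω → A) (V : Ω → B) (W : Ω → C) (W' : Ω → E)
    (f : C → E) (hf : Function.Injective f) (h : ∀ ω, W' ω = f (W ω)) :
    condMI p U V W' = condMI p U V W := by
  have r1 : ent p (fun ω => (U ω, W' ω)) = ent p (fun ω => (U ω, W ω)) :=
    ent_inj (fun ω => (U ω, W ω)) _ (fun x => (x.1, f x.2))
      (fun x y hxy => by
        simp only [Prod.mk.injEq] at hxy; exact Prod.ext hxy.1 (hf hxy.2))
      (fun ω => by rw [h ω])
  have r2 : ent p (fun ω => (V ω, W' ω)) = ent p (fun ω => (V ω, W ω)) :=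
    ent_inj (fun ω => (V ω, W ω)) _ (fun x => (x.1, f x.2))
      (fun x y hxy => by
        simp only [Prod.mk.injEq] at hxy; exact Prod.ext hxy.1 (hf hxy.2))
      (fun ω => by rw [h ω])
  have r3 : ent p (fun ω => (U ω, V ω, W' ω)) = ent p (fun ω => (U ω, V ω, W ω)) :=
    ent_inj (fun ω => (U ω, V ω, W ω)) _ (fun x => (x.1, x.2.1, f x.2.2))
      (fun x y hxy => by
        simp only [Prod.mk.injEq] at hxy
        exact Prod.ext hxy.1 (Prod.ext hxy.2.1 (hf hxy.2.2)))
      (fun ω => by rw [h ω])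
  have r4 : ent p W' = ent p W := ent_inj W _ f hf h
  simp only [condMI]
  rw [r1, r2, r3, r4]

lemma MI_congr₁ (U : Ω → A) (U' : Ω → E) (Z : Ω → B)
    (f : A → E) (hf : Function.Injective f) (h : ∀ ω, U' ω = f (U ω)) :
    MI p U' Z = MI p U Z := by
  have r1 : ent p U' = ent p U := ent_inj U _ f hf h
  have r2 : ent p (fun ω => (U' ω, Z ω)) = ent p (fun ω => (U ω, Z ω)) :=
    ent_inj (fun ω => (U ω, Z ω)) _ (fun x => (f x.1, x.2))
      (fun x y hxy => by
        simp only [Prod.mk.injEq] at hxy; exact Prod.ext (hf hxy.1) hxy.2)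
      (fun ω => by rw [h ω])
  simp only [MI]
  rw [r1, r2]

lemma MI_of_subsingleton [Subsingleton A] (hp1 : ∑ ω, p ω = 1)
    (U : Ω → A) (Z : Ω → B) : MI p U Z = 0 := by
  rcases isEmpty_or_nonempty A with hA | hA
  · rcases isEmpty_or_nonempty Ω with hΩ | hΩ
    · rw [Finset.sum_of_isEmpty] at hp1
      exact absurd hp1 (by norm_num)
    · exact (hA.false (U (Classical.arbitrary Ω))).elim
  · obtain ⟨a0⟩ := hA
    have hU : ∀ ω, U ω = a0 := fun ω => Subsingleton.elim _ _
    have e1 : ent p U = 0 := by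
      unfold ent
      have hs : (Finset.univ : Finset A) = {a0} := by
        apply Finset.eq_singleton_iff_unique_mem.2
        exact ⟨Finset.mem_univ _, fun x _ => Subsingleton.elim _ _⟩
      rw [hs, Finset.sum_singleton]
      have : pmOf p U a0 = 1 := by
        unfold pmOf
        rw [← hp1]
        exact Finset.sum_congr rfl fun ω _ => by rw [if_pos (hU ω)]
      rw [this, Real.negMulLog_one]
    have e2 : ent p (fun ω => (U ω, Z ω)) = ent p Z :=
      ent_inj Z _ (fun b => (a0, b))
        (fun x y hxy => by simpa using hxy)
        (fun ω => by rw [hU ω])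
    simp only [MI]
    rw [e1, e2]
    ring
end Chain

section Main
variable {Ω : Type} [Fintype Ω] {p : Ω → ℝ}
variable {q : ℕ} {𝒳 : Fin q → Type} [∀ i, Fintype (𝒳 i)] [∀ i, DecidableEq (𝒳 i)]
variable {B : Type} [Fintype B] [DecidableEq B]

set_option maxHeartbeats 400000 in
lemma chainA (hp1 : ∑ ω, p ω = 1) (X : ∀ i, Ω → 𝒳 i) (Z : Ω → B)
    (S : Finset (Fin q)) :
    MI p (fun ω => fun t : {t : Fin q // t ∈ S} => X t.1 ω) Z
      = ∑ i ∈ S, condMI p (X i) Z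
          (fun ω => fun t : {t : Fin q // t ∈ S ∧ i < t} => X t.1 ω) := by
  classical
  induction S using Finset.strongInductionOn with
  | _ S ih =>
    rcases S.eq_empty_or_nonempty with rfl | hne
    · have : IsEmpty {t : Fin q // t ∈ (∅ : Finset (Fin q))} :=
        ⟨fun t => absurd t.2 (Finset.notMem_empty _)⟩
      rw [Finset.sum_empty]
      exact MI_of_subsingleton hp1 _ Z
    · set m := S.min' hne with hm
      have hmS : m ∈ S := S.min'_mem hne
      set S' := S.erase m with hS'
      have hsub : S' ⊂ S := Finset.erase_ssubset hmS
      have IH := ih S' hsub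
      -- (1) split off m from the MI
      have split : MI p (fun ω => fun t : {t : Fin q // t ∈ S} => X t.1 ω) Z
          = MI p (fun ω => fun t : {t : Fin q // t ∈ S'} => X t.1 ω) Z
            + condMI p (X m) Z (fun ω => fun t : {t : Fin q // t ∈ S'} => X t.1 ω) := by
        have recode : MI p (fun ω => fun t : {t : Fin q // t ∈ S} => X t.1 ω) Z
            = MI p (fun ω => (X m ω, fun t : {t : Fin q // t ∈ S'} => X t.1 ω)) Z := by
          refine MI_congr₁ (fun ω => (X m ω, fun t : {t : Fin q // t ∈ S'} => X t.1 ω))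
            (fun ω => fun t : {t : Fin q // t ∈ S} => X t.1 ω) Z
            (fun z : 𝒳 m × (∀ t : {t : Fin q // t ∈ S'}, 𝒳 t.1) => fun t : {t : Fin q // t ∈ S} =>
              if H : t.1 = m then cast (congrArg 𝒳 H.symm) z.1
              else z.2 ⟨t.1, Finset.mem_erase.2 ⟨H, t.2⟩⟩) ?_ ?_
          · intro z1 z2 hz
            refine Prod.ext ?_ ?_
            · have h1 := congrFun hz ⟨m, hmS⟩
              simpa using h1
            · funext t
              have h2 := congrFun hz ⟨t.1, Finset.mem_of_mem_erase t.2⟩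
              have hne' : t.1 ≠ m := (Finset.mem_erase.1 t.2).1
              dsimp only at h2
              rw [dif_neg hne', dif_neg hne'] at h2
              convert h2 using 2 <;> exact (Subtype.ext rfl)
          · intro ω
            funext t
            dsimp only
            by_cases H : t.1 = m
            · rw [dif_pos H]
              rcases t with ⟨tv, ht⟩
              dsimp only at H ⊢
              subst H
              rfl
            · rw [dif_neg H]
        rw [recode, MI_chain]
      -- (2) the m-term of the sum
      have mterm : condMI p (X m) Z
            (fun ω => fun t : {t : Fin q // t ∈ S ∧ m < t} => X t.1 ω)
          = condMI p (X m) Z (fun ω => fun t : {t : Fin q // t ∈ S'} => X t.1 ω) := by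
        refine condMI_congr₃ (X m) Z
          (fun ω => fun t : {t : Fin q // t ∈ S'} => X t.1 ω)
          (fun ω => fun t : {t : Fin q // t ∈ S ∧ m < t} => X t.1 ω)
          (fun w : ∀ t : {t : Fin q // t ∈ S'}, 𝒳 t.1 => fun t : {t : Fin q // t ∈ S ∧ m < t} =>
            w ⟨t.1, Finset.mem_erase.2 ⟨ne_of_gt t.2.2, t.2.1⟩⟩) ?_ (fun ω => rfl)
        intro w1 w2 hw
        funext t
        have hlt : m < t.1 := lt_of_le_of_ne (S.min'_le t.1 (Finset.mem_of_mem_erase t.2))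
          (Ne.symm (Finset.mem_erase.1 t.2).1)
        have h2 := congrFun hw ⟨t.1, ⟨Finset.mem_of_mem_erase t.2, hlt⟩⟩
        convert h2 using 2 <;> exact (Subtype.ext rfl)
      -- (3) the other terms
      have oterm : ∀ i ∈ S', condMI p (X i) Z
            (fun ω => fun t : {t : Fin q // t ∈ S' ∧ i < t} => X t.1 ω)
          = condMI p (X i) Z
            (fun ω => fun t : {t : Fin q // t ∈ S ∧ i < t} => X t.1 ω) := by
        intro i hi
        have hmi : m < i := lt_of_le_of_ne (S.min'_le i (Finset.mem_of_mem_erase hi))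
          (Ne.symm (Finset.mem_erase.1 hi).1)
        refine condMI_congr₃ (X i) Z
          (fun ω => fun t : {t : Fin q // t ∈ S ∧ i < t} => X t.1 ω)
          (fun ω => fun t : {t : Fin q // t ∈ S' ∧ i < t} => X t.1 ω)
          (fun w : ∀ t : {t : Fin q // t ∈ S ∧ i < t}, 𝒳 t.1 => fun t : {t : Fin q // t ∈ S' ∧ i < t} =>
            w ⟨t.1, ⟨Finset.mem_of_mem_erase t.2.1, t.2.2⟩⟩) ?_ (fun ω => rfl)
        intro w1 w2 hw
        funext t
        have htm : t.1 ≠ m := ne_of_gt (lt_trans hmi t.2.2)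
        have h2 := congrFun hw ⟨t.1, ⟨Finset.mem_erase.2 ⟨htm, t.2.1⟩, t.2.2⟩⟩
        convert h2 using 2 <;> exact (Subtype.ext rfl)
      rw [split, IH, ← Finset.add_sum_erase S _ hmS, ← hS', mterm]
      rw [Finset.sum_congr rfl oterm]
      ring
end Main

/-- For mutually independent finitely-valued `X_1,…,X_q` and any finitely-valued `Z̃`
on the same finite probability space, and every `S ⊆ {1,…,q}`:
`∑_{i∈S} I(X_i;Z̃|X_{i+1:q}) ≥ I(X_S;Z̃)`. -/
theorem stmt11 {Ω : Type} [Fintype Ω] (q : ℕ) (𝒳 : Fin q → Type)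
    [∀ i, Fintype (𝒳 i)] [∀ i, DecidableEq (𝒳 i)]
    {B : Type} [Fintype B] [DecidableEq B]
    (p : Ω → ℝ) (hp : ∀ ω, 0 ≤ p ω) (hp1 : ∑ ω, p ω = 1)
    (X : ∀ i, Ω → 𝒳 i) (Z : Ω → B)
    (hind : ∀ x : ∀ i, 𝒳 i,
      pmOf p (fun ω => fun i => X i ω) x = ∏ i, pmOf p (X i) (x i))
    (S : Finset (Fin q)) :
    ∑ i ∈ S, condMI p (X i) Z (fun ω => fun t : {t : Fin q // i < t} => X t ω)
      ≥ MI p (fun ω => fun t : {t : Fin q // t ∈ S} => X t ω) Z := by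
  rw [ge_iff_le, chainA hp1 X Z S]
  refine Finset.sum_le_sum fun i hi => ?_
  exact condMI_mono hp hp1 (X i) Z (fun ω => fun t : {t : Fin q // i < t} => X t.1 ω)
    (fun w => fun t : {t : Fin q // t ∈ S ∧ i < t} => w ⟨t.1, t.2.2⟩)
    (fun a v => indep_tail hp1 X hind i a v)
end

section
/- Let W_Y and W_Z be BI-DMCs such that W_Z is degraded with respect to W_Y via a channel W_{Z|Y}, i.e., W_Z(z|x) = Σ_y W_Y(y|x)·W_{Z|Y}(z|y). Then: (i) the PPM super channels of order m = 2^q satisfy W̃_Z(z̃|x_{1:q}) = Σ_{ỹ} W̃_Y(ỹ|x_{1:q})·W_{Z|Y}^{⊗m}(z̃|ỹ) for all x_{1:q}, z̃, i.e., the super channel of W_Z is degraded with respect to the super channel of W_Y; and (ii) with X_1,…,X_q i.i.d. uniform bits, for each level i the conditional pmf of (Z̃, X_{i+1:q}) given X_i satisfies W_{Z̃,X_{i+1:q}|X_i}(z̃, x_{i+1:q} | x_i) = Σ_{ỹ} W_{Z|Y}^{⊗m}(z̃|ỹ)·W_{Ỹ,X_{i+1:q}|X_i}(ỹ, x_{i+1:q}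 | x_i), i.e., each level channel of Willie is degraded with respect to the corresponding level channel of Bob. -/
open Finset

def IsPMF {𝒵 : Type} [Fintype 𝒵] (P : 𝒵 → ℝ) : Prop :=
  (∀ z, 0 ≤ P z) ∧ ∑ z, P z = 1

def dIdx (q : ℕ) (x : Fin q → Bool) : ℕ :=
  ∑ j : Fin q, if x j then 2^(j:ℕ) else 0

lemma sum_two_pow (q : ℕ) : ∑ j ∈ Finset.range q, 2^j = 2^q - 1 := by
  induction q with
  | zero => simp
  | succ q ih =>
    rw [Finset.sum_range_succ, ih, pow_succ]
    have : 0 < 2^q := pow_pos (by norm_num) q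
    omega

lemma dIdx_lt (q : ℕ) (x : Fin q → Bool) : dIdx q x < 2^q := by
  have h1 : dIdx q x ≤ ∑ j : Fin q, 2^(j:ℕ) := by
    apply Finset.sum_le_sum
    intro j _
    split <;> simp
  have h2 : ∑ j : Fin q, 2^(j:ℕ) = 2^q - 1 := by
    rw [Fin.sum_univ_eq_sum_range (fun j => 2^j) q, sum_two_pow]
  have : 0 < 2^q := pow_pos (by norm_num) q
  omega

def ppmPos (q : ℕ) (x : Fin q → Bool) : Fin (2^q) := ⟨dIdx q x, dIdx_lt q x⟩

noncomputable def superCh {𝒴 : Type} [Fintype 𝒴] [DecidableEq 𝒴] (W : Bool → 𝒴 → ℝ)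
    (q : ℕ) (x : Fin q → Bool) (yt : Fin (2^q) → 𝒴) : ℝ :=
  W true (yt (ppmPos q x)) * ∏ h ∈ univ.erase (ppmPos q x), W false (yt h)

noncomputable def condOut {𝒴 : Type} [Fintype 𝒴] [DecidableEq 𝒴] (W : Bool → 𝒴 → ℝ)
    (q : ℕ) (S : Finset (Fin q)) (x : Fin q → Bool) (yt : Fin (2^q) → 𝒴) : ℝ :=
  ((2:ℝ)^S.card)⁻¹ * ∑ xs : {i : Fin q // i ∈ S} → Bool,
    superCh W q (fun i => if h : i ∈ S then xs ⟨i, h⟩ else x i) yt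

noncomputable def infoDen {𝒴 : Type} [Fintype 𝒴] [DecidableEq 𝒴] (W : Bool → 𝒴 → ℝ)
    (q : ℕ) (A B : Finset (Fin q)) : ℝ :=
  ∑ x : Fin q → Bool, ∑ yt : Fin (2^q) → 𝒴,
    ((2:ℝ)^q)⁻¹ * superCh W q x yt * Real.log (condOut W q A x yt / condOut W q B x yt)

noncomputable def infoDen2 {𝒴 : Type} [Fintype 𝒴] [DecidableEq 𝒴] (W : Bool → 𝒴 → ℝ)
    (q : ℕ) (A B : Finset (Fin q)) : ℝ :=
  ∑ x : Fin q → Bool, ∑ yt : Fin (2^q) → 𝒴,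
    ((2:ℝ)^q)⁻¹ * superCh W q x yt * Real.logb 2 (condOut W q A x yt / condOut W q B x yt)

noncomputable def ind (P : Prop) : ℝ := @ite ℝ P (Classical.propDecidable P) 1 0

noncomputable def levelCh {𝒴 : Type} [Fintype 𝒴] [DecidableEq 𝒴] (W : Bool → 𝒴 → ℝ)
    (q : ℕ) (i : Fin q) (xi : Bool) (xtail : {t : Fin q // i < t} → Bool)
    (yt : Fin (2^q) → 𝒴) : ℝ :=
  ((2:ℝ)^(q-1))⁻¹ * ∑ xhead : {t : Fin q // t < i} → Bool,
    superCh W q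
      (fun t => if h : t < i then xhead ⟨t, h⟩ else if h' : i < t then xtail ⟨t, h'⟩ else xi)
      yt

lemma superCh_eq_prod {𝒴 : Type} [Fintype 𝒴] [DecidableEq 𝒴] (W : Bool → 𝒴 → ℝ)
    (q : ℕ) (x : Fin q → Bool) (yt : Fin (2^q) → 𝒴) :
    superCh W q x yt = ∏ h, W (decide (h = ppmPos q x)) (yt h) := by
  rw [superCh, ← Finset.mul_prod_erase univ _ (mem_univ (ppmPos q x))]
  congr 1
  · simp
  · apply Finset.prod_congr rfl
    intro h hh
    rw [Finset.mem_erase] at hh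
    simp [hh.1]

lemma superCh_deg {𝒴 𝒵 : Type} [Fintype 𝒴] [Fintype 𝒵] [DecidableEq 𝒴] [DecidableEq 𝒵]
    (q : ℕ) (WY : Bool → 𝒴 → ℝ) (WZ : Bool → 𝒵 → ℝ)
    (Wdeg : 𝒴 → 𝒵 → ℝ)
    (hdeg : ∀ x z, WZ x z = ∑ y, WY x y * Wdeg y z)
    (x : Fin q → Bool) (zt : Fin (2^q) → 𝒵) :
    superCh WZ q x zt = ∑ yt : Fin (2^q) → 𝒴, superCh WY q x yt * ∏ h, Wdeg (yt h) (zt h) := by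
  have : ∀ yt : Fin (2^q) → 𝒴,
      superCh WY q x yt * ∏ h, Wdeg (yt h) (zt h)
        = ∏ h, (WY (decide (h = ppmPos q x)) (yt h) * Wdeg (yt h) (zt h)) := by
    intro yt
    rw [superCh_eq_prod, ← Finset.prod_mul_distrib]
  simp_rw [this]
  rw [superCh_eq_prod]
  have := Finset.sum_prod_piFinset (univ : Finset 𝒴)
    (fun (h : Fin (2^q)) (y : 𝒴) => WY (decide (h = ppmPos q x)) y * Wdeg y (zt h))
  rw [Fintype.piFinset_univ] at this
  rw [this]
  apply Finset.prod_congr rfl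
  intro h _
  exact (hdeg _ _)

/-- If Willie's channel `WZ` is degraded with respect to Bob's channel `WY` via
`Wdeg`, then (i) the PPM super channel of `WZ` is degraded with respect to the PPM
super channel of `WY` via the memoryless extension `Wdeg^{⊗m}`, and (ii) each level
channel of Willie is degraded with respect to the corresponding level channel of Bob. -/
theorem stmt13 {𝒴 𝒵 : Type} [Fintype 𝒴] [Fintype 𝒵] [DecidableEq 𝒴] [DecidableEq 𝒵]
    (q : ℕ)
    (WY : Bool → 𝒴 → ℝ) (WZ : Bool → 𝒵 → ℝ)
    (hWY : ∀ x, IsPMF (WY x)) (hWZ : ∀ x, IsPMF (WZ x))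
    (Wdeg : 𝒴 → 𝒵 → ℝ) (hWdeg : ∀ y, IsPMF (Wdeg y))
    (hdeg : ∀ x z, WZ x z = ∑ y, WY x y * Wdeg y z) :
    (∀ (x : Fin q → Bool) (zt : Fin (2^q) → 𝒵),
      superCh WZ q x zt
        = ∑ yt : Fin (2^q) → 𝒴, superCh WY q x yt * ∏ h, Wdeg (yt h) (zt h)) ∧
    (∀ (i : Fin q) (xi : Bool) (xtail : {t : Fin q // i < t} → Bool)
        (zt : Fin (2^q) → 𝒵),
      levelCh WZ q i xi xtail zt
        = ∑ yt : Fin (2^q) → 𝒴, (∏ h, Wdeg (yt h) (zt h)) * levelCh WY q i xi xtail yt) := by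
  constructor
  · exact superCh_deg q WY WZ Wdeg hdeg
  · intro i xi xtail zt
    unfold levelCh
    simp_rw [superCh_deg q WY WZ Wdeg hdeg _ zt]
    simp_rw [Finset.mul_sum]
    rw [Finset.sum_comm]
    apply Finset.sum_congr rfl
    intro yt _
    apply Finset.sum_congr rfl
    intro xhead _
    ring
end

section
/- Let W be a BI-DMC with P_0 = W(·|0) everywhere positive and P_1 = W(·|1). Fix q ≥ i ≥ 1, x_i ∈ {0,1}, and x_{i+1:q} ∈ {0,1}^{q−i}. Let X_1,…,X_{i−1} be i.i.d. uniform bits and let Ỹ ∈ 𝒴^{2^q} have law W̃(· | X_{1:i−1}, x_i, x_{i+1:q}) (output of the PPM super channel). Writing 𝒜^q(x_{i+1:q}) = {t_1 < t_2 < … < t_{2^i}}, the pmf of the restricted output (Y_{t_1},…,Y_{t_{2^i}}) equals W^i(·|x_i), the level-i equivalent channel: W^i(y_1,…,y_{2^i}|x_i) = 2^{−(i−1)} Σ_{j=2^{i−1}x_i+1}^{2^{i−1}(x_i+1)} P_0^{⊗2^i}(y_1,…,y_{2^i})·P_1(y_j)/P_0(y_j). In particular, the level-i channel does not depend on the total number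 of levels q nor on x_{i+1:q}. -/
open Finset

lemma two_pow_pos' (q : ℕ) : 0 < 2^q := pow_pos (by norm_num) q

/-- The level-`i` equivalent channel (paper indexing, `i ≥ 1`): a channel from one bit
to `𝒴^{2^i}` given by
`W^i(y|x) = 2^{−(i−1)} ∑_{j=2^{i−1}x}^{2^{i−1}(x+1)−1} P0^{⊗2^i}(y) P1(y_j)/P0(y_j)`
(positions `j` are 0-indexed). -/
noncomputable def equivCh {𝒴 : Type} [Fintype 𝒴] (P0 P1 : 𝒴 → ℝ) (i : ℕ)
    (y : Fin (2^i) → 𝒴) (x : Bool) : ℝ :=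
  ((2:ℝ)^(i-1))⁻¹ * ∑ j : Fin (2^i),
    if 2^(i-1) * (cond x 1 0) ≤ (j:ℕ) ∧ (j:ℕ) < 2^(i-1) * (cond x 1 0 + 1)
    then (∏ h, P0 (y h)) * (P1 (y j) / P0 (y j)) else 0


/- ========= auxiliary lemmas ========= -/

lemma ind_of {P : Prop} (h : P) : ind P = 1 := by simp [ind, h]
lemma ind_of_not {P : Prop} (h : ¬P) : ind P = 0 := by simp [ind, h]

lemma ind_forall {α : Type*} [Fintype α] (P : α → Prop) :
    ind (∀ a, P a) = ∏ a, ind (P a) := by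
  by_cases h : ∀ a, P a
  · rw [ind_of h, Finset.prod_eq_one]
    intro a _; exact ind_of (h a)
  · rw [ind_of_not h]
    push_neg at h; obtain ⟨a, ha⟩ := h
    exact (Finset.prod_eq_zero (Finset.mem_univ a) (ind_of_not ha)).symm

lemma innerSumAux {𝒴 : Type} [Fintype 𝒴] [DecidableEq 𝒴] (W : Bool → 𝒴 → ℝ)
    (h0 : ∑ z, W false z = 1)
    {N M : ℕ} (σ : Fin M → Fin N) (hσ : Function.Injective σ)
    (j : Fin M) (w : Fin M → 𝒴) :
    ∑ yt : Fin N → 𝒴, ind (∀ r, yt (σ r) = w r) *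
      (W true (yt (σ j)) * ∏ h ∈ Finset.univ.erase (σ j), W false (yt h))
    = W true (w j) * ∏ h ∈ Finset.univ.erase j, W false (w h) := by
  classical
  have hne : Nonempty (Fin M) := ⟨j⟩
  set inv := Function.invFun σ with hinvdef
  have hinv : ∀ r, inv (σ r) = r := Function.leftInverse_invFun hσ
  have himg : Finset.filter (fun h => ∃ r, σ r = h) Finset.univ
      = Finset.image σ Finset.univ := by
    ext h; simp [eq_comm]
  set g : Fin N → 𝒴 → ℝ := fun h z =>
    (if (∃ r, σ r = h) then ind (z = w (inv h)) else 1) *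
    (if h = σ j then W true z else W false z) with hg
  have key : ∀ yt : Fin N → 𝒴,
      ind (∀ r, yt (σ r) = w r) *
        (W true (yt (σ j)) * ∏ h ∈ Finset.univ.erase (σ j), W false (yt h))
      = ∏ h, g h (yt h) := by
    intro yt
    rw [hg]
    rw [Finset.prod_mul_distrib]
    congr 1
    · rw [ind_forall, ← Finset.prod_filter, himg,
        Finset.prod_image (fun a _ b _ hab => hσ hab)]
      exact Finset.prod_congr rfl fun r _ => by rw [hinv]
    · rw [← Finset.mul_prod_erase _ _ (Finset.mem_univ (σ j)), if_pos rfl]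
      congr 1
      exact Finset.prod_congr rfl fun h hh => by
        rw [if_neg (Finset.ne_of_mem_erase hh)]
  simp_rw [key]
  rw [← Fintype.piFinset_univ, ← Finset.prod_univ_sum]
  have hsum : ∀ h : Fin N, (∑ z, g h z)
      = (if (∃ r, σ r = h) then
          (if h = σ j then W true (w (inv h)) else W false (w (inv h))) else 1) := by
    intro h
    by_cases hr : ∃ r, σ r = h
    · rw [if_pos hr]
      simp only [hg, if_pos hr, ind]
      by_cases hj : h = σ j
      · rw [if_pos hj]
        simp_rw [if_pos hj]
        simp [ite_mul]
      · rw [if_neg hj]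
        simp_rw [if_neg hj]
        simp [ite_mul]
    · rw [if_neg hr]
      have hj : h ≠ σ j := fun e => hr ⟨j, e.symm⟩
      simp only [hg, if_neg hr, if_neg hj, one_mul]
      exact h0
  rw [Finset.prod_congr rfl (fun h _ => hsum h), ← Finset.prod_filter, himg,
    Finset.prod_image (fun a _ b _ hab => hσ hab)]
  have heach : ∀ r : Fin M,
      (if σ r = σ j then W true (w (inv (σ r))) else W false (w (inv (σ r))))
      = (if r = j then W true (w r) else W false (w r)) := by
    intro r
    rw [hinv]
    congr 1
    simp [hσ.eq_iff]
  rw [Finset.prod_congr rfl (fun r _ => heach r),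
    ← Finset.mul_prod_erase _ _ (Finset.mem_univ j), if_pos rfl]
  congr 1
  exact Finset.prod_congr rfl fun h hh => by rw [if_neg (Finset.ne_of_mem_erase hh)]

lemma base_bound (q i : ℕ) (hiq : i ≤ q) (g : ℕ → ℕ)
    (hz : ∀ t, ¬ i ≤ t → g t = 0) (hle : ∀ t, g t ≤ 2^t) :
    (∑ t ∈ Finset.range q, g t) + 2^i ≤ 2^q := by
  induction q with
  | zero => simpa using (by omega : i = 0) ▸ (by simp)
  | succ q ih =>
    by_cases h : i ≤ q
    · have h1 := ih h
      rw [Finset.sum_range_succ, pow_succ]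
      have := hle q
      omega
    · have hieq : i = q + 1 := by omega
      have hzero : ∑ t ∈ Finset.range (q+1), g t = 0 := by
        apply Finset.sum_eq_zero
        intro t ht
        exact hz t (by simp at ht; omega)
      rw [hzero, hieq]
      omega

lemma idx_lt (i : ℕ) (hi : 1 ≤ i) (c : ℕ) (hc : c ≤ 1) (m : ℕ) (hm : m < 2^(i-1)) :
    2^(i-1) * c + m < 2^i := by
  have h2 : 2^i = 2^(i-1) * 2 := by
    rw [← pow_succ]; congr 1; omega
  have : 2^(i-1) * c ≤ 2^(i-1) * 1 := Nat.mul_le_mul_left _ hc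
  omega

lemma cond_le_one (x : Bool) : (cond x 1 0 : ℕ) ≤ 1 := by cases x <;> simp

def headEquiv (q i : ℕ) (h : i - 1 ≤ q) : {t : Fin q // (t:ℕ) < i-1} ≃ Fin (i-1) where
  toFun t := ⟨t.1.1, t.2⟩
  invFun s := ⟨⟨s.1, lt_of_lt_of_le s.2 h⟩, s.2⟩
  left_inv t := rfl
  right_inv s := rfl

noncomputable def fullEquiv (q i : ℕ) (h : i - 1 ≤ q) :
    ({t : Fin q // (t:ℕ) < i-1} → Bool) ≃ Fin (2^(i-1)) :=
  (Equiv.arrowCongr (headEquiv q i h) finTwoEquiv.symm).trans finFunctionFinEquiv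

lemma fullEquiv_val (q i : ℕ) (h : i - 1 ≤ q) (xhead : {t : Fin q // (t:ℕ) < i-1} → Bool) :
    ((fullEquiv q i h xhead : Fin (2^(i-1))) : ℕ)
    = ∑ t : Fin q, if ht : (t:ℕ) < i-1 then (if xhead ⟨t, ht⟩ then 2^(t:ℕ) else 0) else 0 := by
  classical
  rw [fullEquiv, Equiv.trans_apply, finFunctionFinEquiv_apply]
  set F : ℕ → ℕ := fun m =>
    if hm : m < i - 1 ∧ m < q then (if xhead ⟨⟨m, hm.2⟩, hm.1⟩ then 2^m else 0) else 0 with hF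
  have lhsF : ∀ s : Fin (i-1),
      ((Equiv.arrowCongr (headEquiv q i h) finTwoEquiv.symm xhead s : Fin 2) : ℕ) * 2 ^ (s:ℕ)
        = F (s:ℕ) := by
    intro s
    have hs2 : (s:ℕ) < q := lt_of_lt_of_le s.2 h
    simp only [Equiv.arrowCongr_apply, Function.comp_apply, hF]
    rw [dif_pos ⟨s.2, hs2⟩]
    rcases hb : xhead ((headEquiv q i h).symm s) with _ | _ <;>
      · have hxx : xhead ⟨⟨(s:ℕ), hs2⟩, s.2⟩ = xhead ((headEquiv q i h).symm s) := rfl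
        rw [hxx, hb]
        simp [headEquiv, finTwoEquiv]
  have rhsF : ∀ t : Fin q,
      (if ht : (t:ℕ) < i-1 then (if xhead ⟨t, ht⟩ then 2^(t:ℕ) else 0) else 0) = F (t:ℕ) := by
    intro t
    by_cases ht : (t:ℕ) < i - 1
    · rw [dif_pos ht, hF]
      simp only
      rw [dif_pos ⟨ht, t.2⟩]
    · rw [dif_neg ht, hF]
      simp only
      rw [dif_neg (by omega)]
  rw [Finset.sum_congr rfl (fun s _ => lhsF s), Finset.sum_congr rfl (fun t _ => rhsF t),
    Fin.sum_univ_eq_sum_range F (i-1), Fin.sum_univ_eq_sum_range F q]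
  apply (Finset.sum_subset (Finset.range_subset_range.mpr h) _)
  intro t ht hnt
  simp only [Finset.mem_range] at ht hnt
  rw [hF]; simp only; rw [dif_neg (by omega)]

lemma equivCh_eq {𝒴 : Type} [Fintype 𝒴] [DecidableEq 𝒴] (P0 P1 : 𝒴 → ℝ)
    (hpos : ∀ y, 0 < P0 y) (i : ℕ) (hi : 1 ≤ i) (y : Fin (2^i) → 𝒴) (x : Bool) :
    equivCh P0 P1 i y x = ((2:ℝ)^(i-1))⁻¹ * ∑ m : Fin (2^(i-1)),
      (P1 (y ⟨2^(i-1) * (cond x 1 0) + m, idx_lt i hi _ (cond_le_one x) m m.2⟩) *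
       ∏ h ∈ univ.erase (⟨2^(i-1) * (cond x 1 0) + m,
           idx_lt i hi _ (cond_le_one x) m m.2⟩ : Fin (2^i)), P0 (y h)) := by
  classical
  have hpow : (0:ℕ) < 2^(i-1) := pow_pos (by norm_num) _
  have hA : ∀ j : Fin (2^i), (∏ h, P0 (y h)) * (P1 (y j) / P0 (y j))
      = P1 (y j) * ∏ h ∈ univ.erase j, P0 (y h) := by
    intro j
    rw [← Finset.mul_prod_erase univ _ (Finset.mem_univ j),
      mul_comm (P0 (y j)) (∏ h ∈ univ.erase j, P0 (y h)), mul_assoc,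
      mul_div_assoc', mul_div_cancel_left₀ _ (hpos (y j)).ne', mul_comm]
  rw [equivCh, ← Finset.sum_filter]
  congr 1
  have hc1 : 2^(i-1) * (cond x 1 0 + 1) = 2^(i-1) * cond x 1 0 + 2^(i-1) := by
    rw [Nat.mul_add, mul_one]
  refine (Finset.sum_nbij'
    (fun m : Fin (2^(i-1)) => (⟨2^(i-1) * cond x 1 0 + m,
        idx_lt i hi _ (cond_le_one x) m m.2⟩ : Fin (2^i)))
    (fun j : Fin (2^i) => (⟨((j:ℕ) - 2^(i-1) * cond x 1 0) % 2^(i-1),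
        Nat.mod_lt _ hpow⟩ : Fin (2^(i-1))))
    ?_ ?_ ?_ ?_ ?_).symm
  · intro m _
    simp only [Finset.mem_filter, Finset.mem_univ, true_and, hc1]
    omega
  · intro j _; exact Finset.mem_univ _
  · intro m _
    apply Fin.ext
    simp only
    rw [Nat.add_sub_cancel_left, Nat.mod_eq_of_lt m.2]
  · intro j hj
    simp only [Finset.mem_filter, Finset.mem_univ, true_and, hc1] at hj
    apply Fin.ext
    simp only
    rw [Nat.mod_eq_of_lt (by omega)]
    omega
  · intro m _
    exact (hA _).symm

/-- The channel seen at level `i` of MLC-PPM (paper indexing, `1 ≤ i ≤ q`): with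
`x_i` fixed, the tail bits `x_{i+1:q}` fixed and the bits `x_{1:i−1}` i.i.d. uniform,
the pmf of the output of the PPM super channel restricted to the positions
`𝒜^q(x_{i+1:q}) = {base, base+1, …, base+2^i−1}` (in increasing order) equals the
level-`i` equivalent channel `W^i(·|x_i)`; in particular it depends neither on the
total number of levels `q` nor on `x_{i+1:q}`. -/
theorem stmt14 {𝒴 : Type} [Fintype 𝒴] [DecidableEq 𝒴]
    (W : Bool → 𝒴 → ℝ) (hW : ∀ x, IsPMF (W x)) (hpos : ∀ y, 0 < W false y)
    (q i : ℕ) (hi : 1 ≤ i) (hiq : i ≤ q)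
    (xi : Bool) (xtail : {t : Fin q // i ≤ (t:ℕ)} → Bool) :
    ∀ w : Fin (2^i) → 𝒴,
      (∑ xhead : {t : Fin q // (t:ℕ) < i - 1} → Bool, ((2:ℝ)^(i-1))⁻¹ *
        ∑ yt : Fin (2^q) → 𝒴,
          ind (∀ r : Fin (2^i),
            yt ⟨((∑ t : Fin q, if h : i ≤ (t:ℕ) then
                    (if xtail ⟨t, h⟩ then 2^(t:ℕ) else 0) else 0) + (r:ℕ)) % 2^q,
                 Nat.mod_lt _ (two_pow_pos' q)⟩ = w r) *
          superCh W q
            (fun t => if h1 : (t:ℕ) < i - 1 then xhead ⟨t, h1⟩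
                      else if h2 : i ≤ (t:ℕ) then xtail ⟨t, h2⟩ else xi)
            yt)
      = equivCh (W false) (W true) i w xi := by
  classical
  intro w
  have h0 : ∑ z, W false z = 1 := (hW false).2
  have hq1 : i - 1 ≤ q := by omega
  set base : ℕ := ∑ t : Fin q, if h : i ≤ (t:ℕ) then
      (if xtail ⟨t, h⟩ then 2^(t:ℕ) else 0) else 0 with hbase
  have hbase_le : base + 2^i ≤ 2^q := by
    set g : ℕ → ℕ := fun m =>
      if hm : i ≤ m ∧ m < q then (if xtail ⟨⟨m, hm.2⟩, hm.1⟩ then 2^m else 0) else 0 with hgdef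
    have h1 : base = ∑ t ∈ Finset.range q, g t := by
      rw [hbase, ← Fin.sum_univ_eq_sum_range g q]
      apply Finset.sum_congr rfl
      intro t _
      by_cases h : i ≤ (t:ℕ)
      · rw [dif_pos h, hgdef]; simp only; rw [dif_pos ⟨h, t.2⟩]
      · rw [dif_neg h, hgdef]; simp only; rw [dif_neg (by omega)]
    rw [h1]
    apply base_bound q i hiq g
    · intro t ht; rw [hgdef]; simp only; rw [dif_neg (by omega)]
    · intro t; rw [hgdef]; simp only
      split_ifs <;> simp
  have hσlt : ∀ r : Fin (2^i), base + (r:ℕ) < 2^q := fun r => by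
    have := r.2; omega
  set σ : Fin (2^i) → Fin (2^q) := fun r => ⟨base + (r:ℕ), hσlt r⟩ with hσdef
  have hσinj : Function.Injective σ := by
    intro a b hab
    have hv : base + (a:ℕ) = base + (b:ℕ) := congrArg Fin.val hab
    exact Fin.ext (by omega)
  have hmod : ∀ (yt : Fin (2^q) → 𝒴) (r : Fin (2^i)),
      yt ⟨(base + (r:ℕ)) % 2^q, Nat.mod_lt _ (two_pow_pos' q)⟩ = yt (σ r) := by
    intro yt r
    congr 1
    exact Fin.ext (Nat.mod_eq_of_lt (hσlt r))
  simp only [hmod]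
  set J : Fin (2^(i-1)) → Fin (2^i) := fun m =>
    ⟨2^(i-1) * (cond xi 1 0) + (m:ℕ), idx_lt i hi _ (cond_le_one xi) m m.2⟩ with hJ
  have main : ∀ xhead : {t : Fin q // (t:ℕ) < i - 1} → Bool,
      (∑ yt : Fin (2^q) → 𝒴,
        ind (∀ r : Fin (2^i), yt (σ r) = w r) *
        superCh W q (fun t => if h1 : (t:ℕ) < i - 1 then xhead ⟨t, h1⟩
                      else if h2 : i ≤ (t:ℕ) then xtail ⟨t, h2⟩ else xi) yt)
      = W true (w (J (fullEquiv q i hq1 xhead)))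
        * ∏ h ∈ univ.erase (J (fullEquiv q i hq1 xhead)), W false (w h) := by
    intro xhead
    set xfun : Fin q → Bool := fun t => if h1 : (t:ℕ) < i - 1 then xhead ⟨t, h1⟩
        else if h2 : i ≤ (t:ℕ) then xtail ⟨t, h2⟩ else xi with hxfun
    have hd : dIdx q xfun
        = base + (2^(i-1) * (cond xi 1 0) + ((fullEquiv q i hq1 xhead : Fin (2^(i-1))) : ℕ)) := by
      rw [dIdx, fullEquiv_val q i hq1 xhead]
      have hsplit : ∀ t : Fin q, (if xfun t then 2^(t:ℕ) else 0)
          = (if ht : (t:ℕ) < i-1 then (if xhead ⟨t, ht⟩ then 2^(t:ℕ) else 0) else 0)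
          + ((if (t:ℕ) = i-1 then 2^(i-1) * (cond xi 1 0) else 0)
          + (if h : i ≤ (t:ℕ) then (if xtail ⟨t, h⟩ then 2^(t:ℕ) else 0) else 0)) := by
        intro t
        by_cases h1 : (t:ℕ) < i - 1
        · have e1 : ¬((t:ℕ) = i-1) := by omega
          have e2 : ¬(i ≤ (t:ℕ)) := by omega
          rw [dif_pos h1, if_neg e1, dif_neg e2]
          simp only [hxfun, dif_pos h1]
          omega
        · by_cases h2 : i ≤ (t:ℕ)
          · have e1 : ¬((t:ℕ) = i-1) := by omega
            rw [dif_neg h1, dif_pos h2, if_neg e1]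
            simp only [hxfun, dif_neg h1, dif_pos h2]
            omega
          · have ht : (t:ℕ) = i - 1 := by omega
            rw [dif_neg h1, if_pos ht, dif_neg h2]
            simp only [hxfun, dif_neg h1, dif_neg h2]
            rw [ht]
            cases xi <;> simp
      rw [Finset.sum_congr rfl (fun t _ => hsplit t), Finset.sum_add_distrib,
        Finset.sum_add_distrib]
      have hmid : (∑ t : Fin q, if (t:ℕ) = i-1 then 2^(i-1) * (cond xi 1 0) else 0)
          = 2^(i-1) * (cond xi 1 0) := by
        rw [Finset.sum_eq_single_of_mem (⟨i-1, by omega⟩ : Fin q) (Finset.mem_univ _)]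
        · simp
        · intro b _ hb
          exact if_neg (fun e => hb (Fin.ext e))
      rw [hmid, ← hbase]
      omega
    have hppm : ppmPos q xfun = σ (J (fullEquiv q i hq1 xhead)) := by
      apply Fin.ext
      show dIdx q xfun
        = base + (2^(i-1) * (cond xi 1 0) + ((fullEquiv q i hq1 xhead : Fin (2^(i-1))) : ℕ))
      exact hd
    simp only [superCh, hppm]
    exact innerSumAux W h0 σ hσinj (J (fullEquiv q i hq1 xhead)) w
  simp only [main]
  rw [← Finset.mul_sum]
  rw [equivCh_eq (W false) (W true) hpos i hi w xi]
  congr 1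
  exact Fintype.sum_equiv (fullEquiv q i hq1)
    (fun xhead => W true (w (J (fullEquiv q i hq1 xhead)))
      * ∏ h ∈ univ.erase (J (fullEquiv q i hq1 xhead)), W false (w h))
    (fun m => W true (w (J m)) * ∏ h ∈ univ.erase (J m), W false (w h))
    (fun xhead => rfl)
end
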